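/- Let η be an n×p real matrix of full column rank and Σ an n×n symmetric positive definite matrix. Then the Schur complement inequality holds: ηᵀΣ⁻¹η ⪰ (ηᵀη)(ηᵀΣη)⁻¹(ηᵀη) in the Loewner order, and consequently det(ηᵀΣ⁻¹η) ≥ det(ηᵀη)² / det(ηᵀΣη). -/

import Mathlib

set_option maxHeartbeats 1000000

open Matrix
open scoped Matrix

lemma det_one_add_of_posSemidef {m : ℕ} {E : Matrix (Fin m) (Fin m) ℝ}
    (hE : E.PosSemidef) : 1 ≤ (1 + E).det := by
  have hsp := hE.1.spectral_theorem
  set U : Matrix (Fin m) (Fin m) ℝ := (hE.1.eigenvectorUnitary : Matrix (Fin m) (Fin m) ℝ) with hU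
  have hUU : U * star U = 1 := (Matrix.mem_unitaryGroup_iff).mp hE.1.eigenvectorUnitary.2
  have h1 : (1 : Matrix (Fin m) (Fin m) ℝ) + E
      = U * (1 + diagonal (RCLike.ofReal ∘ hE.1.eigenvalues)) * star U := by
    rw [mul_add, add_mul, mul_one, hUU]; nth_rewrite 1 [hsp]; rfl
  rw [h1, det_mul_right_comm, hUU, one_mul, ← diagonal_one, diagonal_add, det_diagonal]
  calc (1:ℝ) = ∏ _i : Fin m, 1 := by simp
  _ ≤ ∏ i : Fin m, ((1 : Fin m → ℝ) + (RCLike.ofReal ∘ hE.1.eigenvalues : Fin m → ℝ)) i := by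
      refine Finset.prod_le_prod (fun i _ => zero_le_one) fun i _ => ?_
      have := hE.eigenvalues_nonneg i
      simp only [Pi.add_apply, Function.comp_apply, RCLike.ofReal_real_eq_id, id_eq, Pi.one_apply]
      linarith

lemma conj_posDef {n p : ℕ} {M : Matrix (Fin n) (Fin n) ℝ} (hM : M.PosDef)
    (N : Matrix (Fin n) (Fin p) ℝ) (hN : Function.Injective N.mulVec) :
    (Nᵀ * M * N).PosDef := by
  rw [posDef_iff_dotProduct_mulVec]
  have hMs : Mᵀ = M := by
    rw [← conjTranspose_eq_transpose_of_trivial]; exact hM.isHermitian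
  constructor
  · rw [IsHermitian, conjTranspose_eq_transpose_of_trivial]
    simp [transpose_mul, transpose_transpose, hMs, Matrix.mul_assoc]
  · intro x hx
    have hnx : N *ᵥ x ≠ 0 := by
      intro h
      exact hx (hN (by simpa [mulVec_zero] using h : N *ᵥ x = N *ᵥ 0))
    have hpos := hM.dotProduct_mulVec_pos hnx
    have hrw : star x ⬝ᵥ ((Nᵀ * M * N) *ᵥ x) = star (N *ᵥ x) ⬝ᵥ (M *ᵥ (N *ᵥ x)) := by
      rw [← mulVec_mulVec, ← mulVec_mulVec, dotProduct_mulVec, vecMul_transpose]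
      simp [star_trivial]
    rw [hrw]; exact hpos
open scoped MatrixOrder in
lemma det_mono_of_sub_posSemidef {m : ℕ} {A D : Matrix (Fin m) (Fin m) ℝ}
    (hD : D.PosDef) (h : (A - D).PosSemidef) : D.det ≤ A.det := by
  set R := CFC.sqrt D with hRdef
  have hRR : R * R = D := CFC.sqrt_mul_sqrt_self D hD.posSemidef.nonneg
  have hdetD : 0 < D.det := hD.det_pos
  have hdetR : IsUnit R.det := by
    rw [isUnit_iff_ne_zero]
    intro h0
    rw [← hRR, det_mul, h0, mul_zero] at hdetD
    exact lt_irrefl _ hdetD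
  have hRH : R.IsHermitian := (CFC.sqrt_nonneg D).posSemidef.1
  have hRiH : (R⁻¹).IsHermitian := hRH.inv
  set E := R⁻¹ * (A - D) * R⁻¹ with hEdef
  have hE : E.PosSemidef := by
    have := h.conjTranspose_mul_mul_same R⁻¹
    rwa [hRiH.eq] at this
  have hRiR : R⁻¹ * R = 1 := nonsing_inv_mul R hdetR
  have hRRi : R * R⁻¹ = 1 := mul_nonsing_inv R hdetR
  have hA : A = R * (1 + E) * R := by
    rw [hEdef, mul_add, add_mul, mul_one, hRR]
    rw [show R * (R⁻¹ * (A - D) * R⁻¹) * R = (R * R⁻¹) * (A - D) * (R⁻¹ * R) by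
      simp [Matrix.mul_assoc]]
    rw [hRRi, hRiR, one_mul, mul_one, add_sub_cancel]
  have hdet1E : 1 ≤ (1 + E).det := det_one_add_of_posSemidef hE
  calc D.det = D.det * 1 := (mul_one _).symm
  _ ≤ D.det * (1 + E).det := by
      exact mul_le_mul_of_nonneg_left hdet1E hdetD.le
  _ = A.det := by
      rw [hA, det_mul, det_mul, ← hRR, det_mul]; ring

/-- For η of full column rank and Σ symmetric positive definite,
ηᵀΣ⁻¹η ⪰ (ηᵀη)(ηᵀΣη)⁻¹(ηᵀη) in the Loewner order, and consequently
det(ηᵀΣ⁻¹η) ≥ det(ηᵀη)²/det(ηᵀΣη). -/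
theorem stmt6 {n p : ℕ} (η : Matrix (Fin n) (Fin p) ℝ) (hrank : η.rank = p)
    (S : Matrix (Fin n) (Fin n) ℝ) (hS : S.PosDef) :
    (ηᵀ * S⁻¹ * η - (ηᵀ * η) * (ηᵀ * S * η)⁻¹ * (ηᵀ * η)).PosSemidef ∧
    (ηᵀ * η).det ^ 2 / (ηᵀ * S * η).det ≤ (ηᵀ * S⁻¹ * η).det := by
  -- injectivity of η
  have hinj : Function.Injective η.mulVec := by
    have hker : LinearMap.ker η.mulVecLin = ⊥ := by
      have hrn := LinearMap.finrank_range_add_finrank_ker η.mulVecLin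
      rw [show Module.finrank ℝ (Fin p → ℝ) = p by simp] at hrn
      rw [Matrix.rank] at hrank
      have : Module.finrank ℝ (LinearMap.ker η.mulVecLin) = 0 := by omega
      exact Submodule.finrank_eq_zero.mp this
    intro x y hxy
    exact LinearMap.ker_eq_bot.mp hker hxy
  have hSt : Sᵀ = S := by
    rw [← conjTranspose_eq_transpose_of_trivial]; exact hS.isHermitian
  have hB : (ηᵀ * η).PosDef := by
    have := conj_posDef Matrix.PosDef.one η hinj
    rwa [Matrix.mul_one] at this
  have hC : (ηᵀ * S * η).PosDef := conj_posDef hS η hinj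
  have hBinj : Function.Injective (ηᵀ * η).mulVec :=
    mulVec_injective_iff_isUnit.mpr hB.isUnit
  have hBt : (ηᵀ * η)ᵀ = ηᵀ * η := by simp [transpose_mul]
  have hD : ((ηᵀ * η) * (ηᵀ * S * η)⁻¹ * (ηᵀ * η)).PosDef := by
    have := conj_posDef hC.inv (ηᵀ * η) hBinj
    rwa [hBt] at this
  -- key identity
  have hSdet : IsUnit S.det := isUnit_iff_ne_zero.mpr hS.det_pos.ne'
  have hCdet : IsUnit (ηᵀ * S * η).det := isUnit_iff_ne_zero.mpr hC.det_pos.ne'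
  have h1 : S⁻¹ * S = 1 := nonsing_inv_mul S hSdet
  have h2 : S * S⁻¹ = 1 := mul_nonsing_inv S hSdet
  have h3 : (ηᵀ * S * η)⁻¹ * (ηᵀ * S * η) = 1 := nonsing_inv_mul _ hCdet
  have hCit : ((ηᵀ * S * η)⁻¹)ᵀ = (ηᵀ * S * η)⁻¹ := by
    rw [transpose_nonsing_inv]
    congr 1
    simp [transpose_mul, transpose_transpose, hSt, Matrix.mul_assoc]
  have cancel1 : ∀ X : Matrix (Fin n) (Fin p) ℝ, S⁻¹ * (S * X) = X := fun X => by
    rw [← Matrix.mul_assoc, h1, Matrix.one_mul]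
  have cancel2 : ∀ X : Matrix (Fin n) (Fin p) ℝ, S * (S⁻¹ * X) = X := fun X => by
    rw [← Matrix.mul_assoc, h2, Matrix.one_mul]
  have cancelC : ∀ X : Matrix (Fin p) (Fin p) ℝ,
      (ηᵀ * S * η)⁻¹ * (ηᵀ * (S * (η * X))) = X := fun X => by
    rw [show ηᵀ * (S * (η * X)) = (ηᵀ * S * η) * X by simp [Matrix.mul_assoc],
      ← Matrix.mul_assoc, h3, Matrix.one_mul]
  have hCit2 : ((ηᵀ * (S * η))⁻¹)ᵀ = (ηᵀ * (S * η))⁻¹ := by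
    rw [← Matrix.mul_assoc]; exact hCit
  have cancelC2 : ∀ X : Matrix (Fin p) (Fin p) ℝ,
      (ηᵀ * (S * η))⁻¹ * (ηᵀ * (S * (η * X))) = X := by
    rw [← Matrix.mul_assoc]; exact cancelC
  set K : Matrix (Fin n) (Fin p) ℝ :=
    η - S * η * (ηᵀ * S * η)⁻¹ * (ηᵀ * η) with hK
  have key : Kᵀ * S⁻¹ * K = ηᵀ * S⁻¹ * η - (ηᵀ * η) * (ηᵀ * S * η)⁻¹ * (ηᵀ * η) := by
    rw [hK]
    simp only [transpose_sub, transpose_mul, transpose_transpose, hSt, hCit,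
      Matrix.sub_mul, Matrix.mul_sub, Matrix.mul_assoc]
    simp only [hCit2, cancel1, cancel2, cancelC2]
    abel
  have hPSD : (ηᵀ * S⁻¹ * η - (ηᵀ * η) * (ηᵀ * S * η)⁻¹ * (ηᵀ * η)).PosSemidef := by
    have := hS.inv.posSemidef.conjTranspose_mul_mul_same K
    rwa [conjTranspose_eq_transpose_of_trivial, key] at this
  refine ⟨hPSD, ?_⟩
  have hmono := det_mono_of_sub_posSemidef hD hPSD
  have hdetD : ((ηᵀ * η) * (ηᵀ * S * η)⁻¹ * (ηᵀ * η)).det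
      = (ηᵀ * η).det ^ 2 / (ηᵀ * S * η).det := by
    rw [det_mul, det_mul, det_nonsing_inv, Ring.inverse_eq_inv]
    field_simp
  rw [hdetD] at hmono
  exact hmono
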